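/- Let Γ be a topological abelian group, n ≥ 2, and ω₁,…,ωₙ ∈ Γ. For a word μ = (i₁,…,i_k) with letters in {1,…,n}, write ω_μ = ω_{i₁} + ⋯ + ω_{i_k}. If −ω_i does not lie in the closure of the set {ω_μ : μ a nonempty word} for every i ∈ {1,…,n}, and U ⊆ Γ is a subset with Ū − Ū compact, then there exists K ∈ ℕ such that for every word μ with |μ| > K, the sets U − ω_μ and U are disjoint. -/

import Mathlib

open Pointwise

private def wordOf {n : ℕ} (c : Fin n → ℕ) : List (Fin n) :=
  (List.finRange n).flatMap fun i => List.replicate (c i) i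

private lemma wordOf_sum {Γ : Type*} [AddCommMonoid Γ] {n : ℕ} (ω : Fin n → Γ) (c : Fin n → ℕ) :
    ((wordOf c).map ω).sum = ∑ i, c i • ω i := by
  simp [wordOf, List.map_flatMap, Fin.sum_univ_def, List.flatMap, List.sum_flatten,
    List.map_map, Function.comp_def, List.map_replicate, List.sum_replicate]

private lemma wordOf_length {n : ℕ} (c : Fin n → ℕ) :
    (wordOf c).length = ∑ i, c i := by
  simp [wordOf, Fin.sum_univ_def, List.flatMap, List.map_map, Function.comp_def]

private lemma sum_map_count {Γ : Type*} [AddCommMonoid Γ] {n : ℕ} (ω : Fin n → Γ)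
    (l : List (Fin n)) : (l.map ω).sum = ∑ i, l.count i • ω i := by
  induction l with
  | nil => simp
  | cons a t ih =>
    simp only [List.map_cons, List.sum_cons, ih, List.count_cons, beq_iff_eq]
    rw [show (∑ i, (t.count i + if a = i then 1 else 0) • ω i)
        = ∑ i, (t.count i • ω i + (if a = i then ω i else 0)) from
        Finset.sum_congr rfl fun i _ => by split <;> simp [add_nsmul],
      Finset.sum_add_distrib, Finset.sum_ite_eq Finset.univ a ω]
    simp [add_comm]

private lemma count_length {n : ℕ} (l : List (Fin n)) : l.length = ∑ i, l.count i := by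
  simpa using (Multiset.sum_count_eq_card (s := Finset.univ)
    (m := (l : Multiset (Fin n))) (by simp)).symm

theorem stmt0 {Γ : Type*} [AddCommGroup Γ] [TopologicalSpace Γ] [IsTopologicalAddGroup Γ]
    [T2Space Γ] (n : ℕ) (hn : 2 ≤ n) (ω : Fin n → Γ)
    (hω : ∀ i : Fin n,
      -ω i ∉ closure {γ : Γ | ∃ μ : List (Fin n), μ ≠ [] ∧ (μ.map ω).sum = γ})
    (U : Set Γ) (hU : IsCompact (closure U - closure U)) :
    ∃ K : ℕ, ∀ μ : List (Fin n), μ.length > K →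
      Disjoint ((fun γ => γ - (μ.map ω).sum) '' U) U := by
  classical
  by_contra hcon
  push_neg at hcon
  set S : Set Γ := {γ : Γ | ∃ μ : List (Fin n), μ ≠ [] ∧ (μ.map ω).sum = γ} with hS
  choose m hm1 hm2 using hcon
  set v : ℕ → Γ := fun k => ((m k).map ω).sum with hv
  have hmC : ∀ k, v k ∈ closure U - closure U := by
    intro k
    obtain ⟨y, hy1, hy2⟩ := Set.not_disjoint_iff.mp (hm2 k)
    obtain ⟨u, hu, hux⟩ := hy1
    have : v k = u - y := by
      simp only [hv, ← hux]; abel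
    rw [this]
    exact Set.sub_mem_sub (subset_closure hu) (subset_closure hy2)
  set N : Set Γ := ⋂ i, (fun x => x - ω i) ⁻¹' (closure S)ᶜ with hN
  have hNopen : IsOpen N :=
    isOpen_iInter_of_finite fun i =>
      (isClosed_closure.isOpen_compl).preimage (continuous_sub_right _)
  have hN0 : (0 : Γ) ∈ N := Set.mem_iInter.mpr fun i => by
    simpa using hω i
  have hkey : ∀ β : List (Fin n), 2 ≤ β.length → (β.map ω).sum ∉ N := by
    intro β hβ hmem
    match β, hβ, hmem with
    | i :: β', hβ, hmem =>
      have hβ' : β' ≠ [] := by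
        intro h; subst h; simp at hβ
      have h1 : (β'.map ω).sum ∈ closure S := subset_closure ⟨β', hβ', rfl⟩
      have h2 := Set.mem_iInter.mp hmem i
      apply h2
      have h3 : ((i :: β').map ω).sum - ω i = (β'.map ω).sum := by
        rw [List.map_cons, List.sum_cons, add_sub_cancel_left]
      simpa [h3] using h1
  set c : ℕ → (Fin n → ℕ) := fun k i => (m k).count i with hc
  obtain ⟨g, hg⟩ := (Set.isPWO_of_wellQuasiOrderedLE
    (Set.univ : Set (Fin n → ℕ))).exists_monotone_subseq (f := c)
    (fun _ => Set.mem_univ _)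
  have hle : Filter.map (v ∘ g) Filter.atTop ≤ Filter.principal (closure U - closure U) := by
    rw [Filter.le_principal_iff, Filter.mem_map]
    exact Filter.Eventually.of_forall fun k => hmC _
  obtain ⟨x, hxC, hx⟩ := hU.exists_mapClusterPt (u := v ∘ g) hle
  have hsub : (fun p : Γ × Γ => p.1 - p.2) ⁻¹' N ∈ nhds (x, x) := by
    apply ContinuousAt.preimage_mem_nhds continuous_sub.continuousAt
    simpa using hNopen.mem_nhds hN0
  rw [nhds_prod_eq] at hsub
  obtain ⟨V, hV, hVsub⟩ := Filter.mem_prod_self_iff.mp hsub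
  have hfreq : ∃ᶠ k in Filter.atTop, (v ∘ g) k ∈ V := mapClusterPt_iff_frequently.mp hx V hV
  obtain ⟨k, -, hk⟩ := Filter.frequently_atTop.mp hfreq 0
  obtain ⟨l, hl, hlV⟩ := Filter.frequently_atTop.mp hfreq (max k (∑ i, c (g k) i + 2))
  have hkl : k ≤ l := le_trans (le_max_left _ _) hl
  have hab : ∀ i, c (g k) i ≤ c (g l) i := fun i => hg hkl i
  have hlen : ∀ j, ∑ i, c j i = (m j).length := fun j => (count_length (m j)).symm
  have hgl : ∑ i, c (g k) i + 2 ≤ ∑ i, c (g l) i := by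
    have h1 : (∑ i, c (g k) i + 2) ≤ l := le_trans (le_max_right _ _) hl
    have h2 : l ≤ g l := g.strictMono.le_apply
    have h3 : g l < (m (g l)).length := hm1 (g l)
    have h4 := hlen (g l)
    omega
  set d : Fin n → ℕ := fun i => c (g l) i - c (g k) i with hd
  have hβsum : ((wordOf d).map ω).sum
      = ((m (g l)).map ω).sum - ((m (g k)).map ω).sum := by
    rw [wordOf_sum]
    rw [sum_map_count ω (m (g l)), sum_map_count ω (m (g k)), ← Finset.sum_sub_distrib]
    refine Finset.sum_congr rfl fun i _ => ?_
    rw [hd, sub_nsmul (ω i) (hab i), sub_eq_add_neg]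
  have hβlen : 2 ≤ (wordOf d).length := by
    rw [wordOf_length]
    have h5 : ∑ i, d i + ∑ i, c (g k) i = ∑ i, c (g l) i := by
      rw [← Finset.sum_add_distrib]
      exact Finset.sum_congr rfl fun i _ => Nat.sub_add_cancel (hab i)
    omega
  refine hkey (wordOf d) hβlen ?_
  rw [hβsum]
  exact hVsub (Set.mk_mem_prod hlV hk)
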